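/- Let m, α ∈ (0,1) and define m̂ = mα/(1-(1-α)m). Then m̂ ∈ (0,1), m̂ < m (when α < 1), and the averaged matrix Γ̄ = (1-m̂)(αΦ + (1-α)I) + (m̂/n)u1_rᵀ satisfies Γ̄ = (m̂/m)Γ + (1 - m̂/m)I, where Γ = (1-m)Φ + (m/n)u1_rᵀ. Consequently the unique probability eigenvector of Γ with eigenvalue 1 is also the unique probability eigenvector of Γ̄ with eigenvalue 1. -/

import Mathlib

/-- Column stochastic: nonnegative entries, each column sums to 1. -/
def ColStoch {r : ℕ} (A : Matrix (Fin r) (Fin r) ℝ) : Prop :=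
  (∀ i j, 0 ≤ A i j) ∧ ∀ j, ∑ i, A i j = 1

/-- A probability vector. -/
def ProbVec {r : ℕ} (x : Fin r → ℝ) : Prop :=
  (∀ i, 0 ≤ x i) ∧ ∑ i, x i = 1

lemma colsum {r : ℕ} {Φ : Matrix (Fin r) (Fin r) ℝ} (hΦ : ColStoch Φ)
    (v : Fin r → ℝ) : ∑ i, Φ.mulVec v i = ∑ j, v j := by
  simp only [Matrix.mulVec, dotProduct]
  rw [Finset.sum_comm]
  simp [← Finset.sum_mul, hΦ.2]

lemma contract {r : ℕ} {Φ : Matrix (Fin r) (Fin r) ℝ} (hΦ : ColStoch Φ)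
    {c : ℝ} (hc1 : c < 1) {w : Fin r → ℝ} (hw : ∀ i, 0 ≤ w i)
    (h : ∀ i, w i ≤ c * Φ.mulVec w i) : w = 0 := by
  have hs : ∑ i, w i ≤ c * ∑ i, w i := by
    calc ∑ i, w i ≤ ∑ i, c * Φ.mulVec w i := Finset.sum_le_sum fun i _ => h i
    _ = c * ∑ i, Φ.mulVec w i := by rw [Finset.mul_sum]
    _ = c * ∑ i, w i := by rw [colsum hΦ]
  have hnn : 0 ≤ ∑ i, w i := Finset.sum_nonneg fun i _ => hw i
  have hz : ∑ i, w i = 0 := by nlinarith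
  funext i
  have := (Finset.sum_eq_zero_iff_of_nonneg (fun i _ => hw i)).1 hz i (Finset.mem_univ i)
  simpa using this

lemma abs_mulVec_le {r : ℕ} {Φ : Matrix (Fin r) (Fin r) ℝ} (hΦ : ColStoch Φ)
    (d : Fin r → ℝ) (i : Fin r) :
    |Φ.mulVec d i| ≤ Φ.mulVec (fun j => |d j|) i := by
  simp only [Matrix.mulVec, dotProduct]
  calc |∑ j, Φ i j * d j| ≤ ∑ j, |Φ i j * d j| := Finset.abs_sum_le_sum_abs _ _
  _ = ∑ j, Φ i j * |d j| := by
      refine Finset.sum_congr rfl fun j _ => ?_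
      rw [abs_mul, abs_of_nonneg (hΦ.1 i j)]

lemma eig_zero {r : ℕ} {Φ : Matrix (Fin r) (Fin r) ℝ} (hΦ : ColStoch Φ)
    {c : ℝ} (hc0 : 0 ≤ c) (hc1 : c < 1) {d : Fin r → ℝ}
    (hd : ∀ i, d i = c * Φ.mulVec d i) : d = 0 := by
  have h := contract hΦ hc1 (w := fun i => |d i|) (fun i => abs_nonneg _) ?_
  · funext i
    have := congrFun h i
    simpa [abs_eq_zero] using this
  · intro i
    show |d i| ≤ c * Φ.mulVec (fun i => |d i|) i
    rw [hd i, abs_mul, abs_of_nonneg hc0]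
    exact mul_le_mul_of_nonneg_left (abs_mulVec_le hΦ d i) hc0

/-- With `m̂ = mα/(1-(1-α)m)` one has `m̂ ∈ (0,1)`, `m̂ < m` when `α < 1`,
`Γ̄ = (m̂/m)Γ + (1-m̂/m)I`, and the unique probability eigenvector of `Γ` for
eigenvalue 1 is also the unique probability eigenvector of `Γ̄`. -/
theorem stmt18 {r : ℕ} (hr : 0 < r)
    (m α : ℝ) (hm0 : 0 < m) (hm1 : m < 1) (hα0 : 0 < α) (hα1 : α < 1)
    (mh : ℝ) (hmh : mh = m * α / (1 - (1 - α) * m))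
    (Φ : Matrix (Fin r) (Fin r) ℝ) (hΦ : ColStoch Φ)
    (n : ℕ) (hn : 0 < n) (u : Fin r → ℝ)
    (hu : ∀ i, 0 < u i) (husum : ∑ i, u i = (n : ℝ))
    (Γ Γbar : Matrix (Fin r) (Fin r) ℝ)
    (hΓ : Γ = (1 - m) • Φ + (m / n) • Matrix.of (fun i _ : Fin r => u i))
    (hΓbar : Γbar = (1 - mh) • (α • Φ + (1 - α) • (1 : Matrix (Fin r) (Fin r) ℝ))
                  + (mh / n) • Matrix.of (fun i _ : Fin r => u i)) :
    0 < mh ∧ mh < 1 ∧ mh < m ∧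
    Γbar = (mh / m) • Γ + (1 - mh / m) • (1 : Matrix (Fin r) (Fin r) ℝ) ∧
    (∃! x : Fin r → ℝ, ProbVec x ∧ Γ.mulVec x = x) ∧
    (∀ x : Fin r → ℝ, ProbVec x → (Γ.mulVec x = x ↔ Γbar.mulVec x = x)) := by
  have hD : 0 < 1 - (1 - α) * m := by nlinarith
  have hn0 : (n : ℝ) ≠ 0 := by positivity
  have hmh0 : 0 < mh := by rw [hmh]; positivity
  have hmh1 : mh < 1 := by rw [hmh, div_lt_one hD]; nlinarith
  have hmhm : mh < m := by
    rw [hmh, div_lt_iff₀ hD]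
    nlinarith [mul_pos hm0 (mul_pos (sub_pos.mpr hα1) (sub_pos.mpr hm1))]
  have hm' : (0:ℝ) ≤ 1 - m := by linarith
  have hm'' : 1 - m < 1 := by linarith
  -- matrix identity
  have hmat : Γbar = (mh / m) • Γ + (1 - mh / m) • (1 : Matrix (Fin r) (Fin r) ℝ) := by
    subst hΓ hΓbar hmh
    ext i j
    simp only [Matrix.add_apply, Matrix.smul_apply, Matrix.one_apply, Matrix.of_apply,
      smul_eq_mul]
    by_cases h : i = j <;> simp [h] <;> generalize hDd : 1 - (1 - α) * m = D at hD ⊢ <;>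
      field_simp [hD.ne'] <;> rw [← hDd] <;> ring
  -- mulVec formula for Γ
  have hΓv : ∀ x : Fin r → ℝ,
      Γ.mulVec x = fun i => (1 - m) * Φ.mulVec x i + (m / n) * ((∑ j, x j) * u i) := by
    intro x
    funext i
    subst hΓ
    simp only [Matrix.add_mulVec, Matrix.smul_mulVec, Matrix.mulVec, dotProduct,
      Matrix.of_apply, Matrix.add_apply, Matrix.smul_apply, Pi.add_apply, Pi.smul_apply, smul_eq_mul]
    rw [show (m / ↑n) * ((∑ j, x j) * u i) = ∑ j, (m / ↑n) * (x j * u i) by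
      rw [Finset.sum_mul, Finset.mul_sum], Finset.mul_sum, ← Finset.sum_add_distrib]
    exact Finset.sum_congr rfl fun j _ => by ring
  -- existence of a fixed point
  set B : Matrix (Fin r) (Fin r) ℝ := (1 : Matrix (Fin r) (Fin r) ℝ) - (1 - m) • Φ with hB
  have hBv : ∀ d, B.mulVec d = fun i => d i - (1 - m) * Φ.mulVec d i := by
    intro d
    funext i
    simp [hB, Matrix.sub_mulVec, Matrix.smul_mulVec, Matrix.one_mulVec]
  have hker : ∀ d, B.mulVec d = 0 → d = 0 := by
    intro d hd
    refine eig_zero hΦ hm' hm'' fun i => ?_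
    have := congrFun hd i
    rw [hBv d] at this
    simp at this
    linarith [this]
  have hinj : Function.Injective B.mulVecLin := by
    intro a b hab
    have : B.mulVec (a - b) = 0 := by
      rw [Matrix.mulVec_sub]
      simp only [Matrix.mulVecLin_apply] at hab
      rw [hab]; simp
    have := hker _ this
    funext i
    have := congrFun this i
    simp at this
    linarith
  have hsurj : Function.Surjective B.mulVecLin :=
    (LinearMap.injective_iff_surjective).1 hinj
  obtain ⟨x, hx⟩ := hsurj ((m / n) • u)
  simp only [Matrix.mulVecLin_apply] at hx
  have hxeq : ∀ i, x i = (1 - m) * Φ.mulVec x i + (m / n) * u i := by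
    intro i
    have := congrFun hx i
    rw [hBv x] at this
    simp at this
    linarith
  -- sum of x is 1
  have hsum1 : ∑ i, x i = 1 := by
    have h1 : ∑ i, x i = (1 - m) * (∑ i, Φ.mulVec x i) + (m / n) * ∑ i, u i := by
      rw [Finset.mul_sum, Finset.mul_sum, ← Finset.sum_add_distrib]
      exact Finset.sum_congr rfl fun i _ => hxeq i
    rw [colsum hΦ, husum] at h1
    have : (m / n) * (n : ℝ) = m := by field_simp
    rw [this] at h1
    have hmne : m ≠ 0 := ne_of_gt hm0
    nlinarith [h1]
  -- nonnegativity of x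
  have hxnn : ∀ i, 0 ≤ x i := by
    intro i
    set w : Fin r → ℝ := fun i => max (-x i) 0 with hwdef
    have hw0 : ∀ i, 0 ≤ w i := fun i => le_max_right _ _
    have hwc : w = 0 := by
      refine contract hΦ hm'' hw0 fun i => ?_
      have hle : Φ.mulVec (-x) i ≤ Φ.mulVec w i := by
        simp only [Matrix.mulVec, dotProduct]
        refine Finset.sum_le_sum fun j _ => ?_
        exact mul_le_mul_of_nonneg_left (le_max_left _ _) (hΦ.1 i j)
      have hnegx : Φ.mulVec (-x) i = -Φ.mulVec x i := by
        simp [Matrix.mulVec, dotProduct, Finset.sum_neg_distrib]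
      have h1 : -x i ≤ (1 - m) * Φ.mulVec w i := by
        have := hxeq i
        have hui : 0 ≤ (m / n) * u i := mul_nonneg (by positivity) (hu i).le
        nlinarith [hle, hnegx, mul_le_mul_of_nonneg_left (hnegx ▸ hle) hm']
      have h2 : 0 ≤ (1 - m) * Φ.mulVec w i := by
        refine mul_nonneg hm' ?_
        simp only [Matrix.mulVec, dotProduct]
        exact Finset.sum_nonneg fun j _ => mul_nonneg (hΦ.1 i j) (hw0 j)
      exact max_le h1 h2
    have := congrFun hwc i
    simp only [hwdef, Pi.zero_apply] at this
    have h := le_max_left (-x i) 0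
    rw [this] at h
    linarith
  have hxfix : Γ.mulVec x = x := by
    funext i
    rw [hΓv x]
    simp only [hsum1, one_mul]
    linarith [hxeq i]
  refine ⟨hmh0, hmh1, hmhm, hmat, ⟨x, ⟨⟨hxnn, hsum1⟩, hxfix⟩, ?_⟩, ?_⟩
  · -- uniqueness
    rintro y ⟨⟨hynn, hysum⟩, hyfix⟩
    have hyeq : ∀ i, y i = (1 - m) * Φ.mulVec y i + (m / n) * u i := by
      intro i
      have := congrFun hyfix i
      rw [hΓv y] at this
      simp only [hysum, one_mul] at this
      linarith
    have hd : (fun i => y i - x i) = 0 := by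
      refine eig_zero hΦ hm' hm'' fun i => ?_
      have : Φ.mulVec (fun j => y j - x j) i = Φ.mulVec y i - Φ.mulVec x i := by
        simp [Matrix.mulVec, dotProduct, mul_sub, Finset.sum_sub_distrib]
      rw [this, mul_sub]
      linarith [hyeq i, hxeq i]
    funext i
    have := congrFun hd i
    simp at this
    linarith
  · -- the iff
    intro z hz
    have hcomb : Γbar.mulVec z = (mh / m) • Γ.mulVec z + (1 - mh / m) • z := by
      rw [hmat, Matrix.add_mulVec, Matrix.smul_mulVec, Matrix.smul_mulVec,
        Matrix.one_mulVec]
    have hmm0 : 0 < mh / m := div_pos hmh0 hm0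
    constructor
    · intro h
      rw [hcomb, h]
      funext i
      simp only [Pi.add_apply, Pi.smul_apply, smul_eq_mul]
      ring
    · intro h
      rw [hcomb] at h
      funext i
      have hi := congrFun h i
      simp only [Pi.add_apply, Pi.smul_apply, smul_eq_mul] at hi
      have : (mh / m) * (Γ.mulVec z i - z i) = 0 := by linarith
      rcases mul_eq_zero.1 this with h' | h'
      · exact absurd h' (ne_of_gt hmm0)
      · linarith
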